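/- arXiv:1511.02399 — 7 statements merged into one kernel-verified Lean document; each statement's English description precedes it below -/
import Mathlib

section
/- In the XOS two-buyer example with m > 2 items, the fractional allocation x where x_{1,{j}} = 1/m for each item j, x_{2,{j}} = 1/(m(m−1)) for each j, and x_{2,M} = (m−2)/(m−1), is feasible for the configuration LP and achieves welfare m/2 + 1/(2(m−1)) − δ, which strictly exceeds m/2 whenever 0 < δ < 1/(2(m−1)). -/
lemma sum_card_one_aux (m : ℕ) (c : ℝ) :
    ∑ S ∈ (Finset.univ.powerset : Finset (Finset (Fin m))),
      (if S.card = 1 then c else 0) = m * c := by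
  rw [← Finset.sum_filter, ← Finset.powersetCard_eq_filter, Finset.sum_const,
    Finset.card_powersetCard, Finset.card_univ, Fintype.card_fin,
    Nat.choose_one_right, nsmul_eq_mul]

lemma sum_card_one_mem_aux (m : ℕ) (c : ℝ) (j : Fin m) :
    ∑ S ∈ (Finset.univ.powerset.filter (fun S => j ∈ S) : Finset (Finset (Fin m))),
      (if S.card = 1 then c else 0) = c := by
  rw [← Finset.sum_filter]
  have h : (Finset.univ.powerset.filter (fun S => j ∈ S)).filter
      (fun S : Finset (Fin m) => S.card = 1) = {{j}} := by
    ext S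
    simp only [Finset.mem_filter, Finset.mem_powerset, Finset.mem_singleton,
      Finset.card_eq_one]
    constructor
    · rintro ⟨⟨-, hj⟩, a, rfl⟩
      simp only [Finset.mem_singleton] at hj
      rw [hj]
    · rintro rfl
      exact ⟨⟨Finset.subset_univ _, Finset.mem_singleton_self j⟩, j, rfl⟩
  rw [h, Finset.sum_singleton]

/-- in the two-buyer XOS example with `m > 2` items, the given
fractional allocation is feasible for the configuration LP and has welfare
`m/2 + 1/(2(m−1)) − δ > m/2` for `0 < δ < 1/(2(m−1))`. -/
theorem stmt6 (m : ℕ) (hm : 2 < m) (δ : ℝ) (hδ0 : 0 < δ)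
    (hδ : δ < 1 / (2 * ((m : ℝ) - 1)))
    (v : Fin 2 → Finset (Fin m) → ℝ)
    (hv1 : ∀ S : Finset (Fin m), v 0 S = if S = ∅ then 0 else 1 / 2 - δ)
    (hv2 : ∀ S : Finset (Fin m), v 1 S = if S = ∅ then 0 else max 1 ((S.card : ℝ) / 2))
    (x : Fin 2 → Finset (Fin m) → ℝ)
    (hx1 : ∀ S : Finset (Fin m),
      x 0 S = if S.card = 1 then 1 / (m : ℝ) else 0)
    (hx2 : ∀ S : Finset (Fin m),
      x 1 S = if S.card = 1 then 1 / ((m : ℝ) * ((m : ℝ) - 1))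
        else if S = Finset.univ then ((m : ℝ) - 2) / ((m : ℝ) - 1) else 0) :
    (∀ i S, 0 ≤ x i S) ∧
    (∀ i : Fin 2, ∑ S ∈ Finset.univ.powerset, x i S ≤ 1) ∧
    (∀ j : Fin m, ∑ i : Fin 2, ∑ S ∈ Finset.univ.powerset.filter (fun S => j ∈ S),
        x i S ≤ 1) ∧
    (∑ i : Fin 2, ∑ S ∈ Finset.univ.powerset, v i S * x i S
        = (m : ℝ) / 2 + 1 / (2 * ((m : ℝ) - 1)) - δ) ∧
    ((m : ℝ) / 2 < (m : ℝ) / 2 + 1 / (2 * ((m : ℝ) - 1)) - δ) := by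
  have hmR : (2 : ℝ) < (m : ℝ) := by exact_mod_cast hm
  have hm0 : (m : ℝ) ≠ 0 := by linarith
  have hm1 : (m : ℝ) - 1 ≠ 0 := by linarith
  have hm1pos : (0 : ℝ) < (m : ℝ) - 1 := by linarith
  -- pointwise decomposition of x 1
  have hsplit : ∀ S : Finset (Fin m),
      x 1 S = (if S.card = 1 then 1 / ((m : ℝ) * ((m : ℝ) - 1)) else 0)
        + (if S = Finset.univ then ((m : ℝ) - 2) / ((m : ℝ) - 1) else 0) := by
    intro S
    rw [hx2]
    by_cases h1 : S.card = 1
    · have hnu : S ≠ Finset.univ := by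
        intro h
        rw [h, Finset.card_univ, Fintype.card_fin] at h1
        omega
      simp [h1, hnu]
    · simp [h1]
  have hvx0 : ∀ S : Finset (Fin m),
      v 0 S * x 0 S = if S.card = 1 then (1 / 2 - δ) * (1 / (m : ℝ)) else 0 := by
    intro S
    rw [hv1, hx1]
    by_cases h1 : S.card = 1
    · have hne : S ≠ ∅ := by
        intro h; rw [h] at h1; simp at h1
      simp [h1, hne]
    · simp [h1]
  have hvx1 : ∀ S : Finset (Fin m),
      v 1 S * x 1 S = (if S.card = 1 then 1 / ((m : ℝ) * ((m : ℝ) - 1)) else 0)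
        + (if S = Finset.univ then ((m : ℝ) / 2) * (((m : ℝ) - 2) / ((m : ℝ) - 1)) else 0) := by
    intro S
    rw [hv2, hx2]
    by_cases h1 : S.card = 1
    · have hne : S ≠ ∅ := by
        intro h; rw [h] at h1; simp at h1
      have hnu : S ≠ Finset.univ := by
        intro h
        rw [h, Finset.card_univ, Fintype.card_fin] at h1
        omega
      have hc : ((S.card : ℝ)) / 2 = 1 / 2 := by rw [h1]; norm_num
      rw [if_neg hne, if_pos h1, if_pos h1, if_neg hnu, add_zero, hc,
        max_eq_left (by norm_num : (1:ℝ)/2 ≤ 1), one_mul]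
    · by_cases h2 : S = Finset.univ
      · subst h2
        have hne : (Finset.univ : Finset (Fin m)) ≠ ∅ := by
          have : 0 < (Finset.univ : Finset (Fin m)).card := by
            rw [Finset.card_univ, Fintype.card_fin]; omega
          intro h; rw [h] at this; simp at this
        have hcard : ((Finset.univ : Finset (Fin m)).card : ℝ) = (m : ℝ) := by
          rw [Finset.card_univ, Fintype.card_fin]
        have hmax : max (1 : ℝ) (((Finset.univ : Finset (Fin m)).card : ℝ) / 2)
            = (m : ℝ) / 2 := by
          rw [hcard]; exact max_eq_right (by linarith)
        rw [if_neg hne, if_neg h1, if_neg h1, if_pos rfl, if_pos rfl, zero_add, hmax]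
      · simp [h1, h2]
  refine ⟨?_, ?_, ?_, ?_, ?_⟩
  · -- nonnegativity
    have n0 : ∀ S : Finset (Fin m), 0 ≤ x 0 S := by
      intro S
      rw [hx1]
      split_ifs
      · positivity
      · exact le_refl 0
    have n1 : ∀ S : Finset (Fin m), 0 ≤ x 1 S := by
      intro S
      rw [hx2]
      split_ifs
      · positivity
      · apply div_nonneg <;> linarith
      · exact le_refl 0
    intro i S
    fin_cases i
    · exact n0 S
    · exact n1 S
  · -- buyer constraints
    have b0 : ∑ S ∈ Finset.univ.powerset, x 0 S ≤ 1 := by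
      simp only [hx1]
      rw [sum_card_one_aux, mul_one_div, div_self hm0]
    have b1 : ∑ S ∈ Finset.univ.powerset, x 1 S ≤ 1 := by
      rw [Finset.sum_congr rfl (fun S _ => hsplit S), Finset.sum_add_distrib,
        sum_card_one_aux, Finset.sum_ite_eq']
      simp only [Finset.mem_powerset, Finset.subset_univ, if_true]
      have : (m : ℝ) * (1 / ((m : ℝ) * ((m : ℝ) - 1))) + ((m : ℝ) - 2) / ((m : ℝ) - 1)
          = 1 := by field_simp; ring
      linarith
    intro i
    fin_cases i
    · exact b0
    · exact b1
  · -- item constraints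
    intro j
    rw [Fin.sum_univ_two]
    have e0 : ∑ S ∈ Finset.univ.powerset.filter (fun S => j ∈ S), x 0 S
        = 1 / (m : ℝ) := by
      simp only [hx1]
      exact sum_card_one_mem_aux m _ j
    have e1 : ∑ S ∈ Finset.univ.powerset.filter (fun S => j ∈ S), x 1 S
        = 1 / ((m : ℝ) * ((m : ℝ) - 1)) + ((m : ℝ) - 2) / ((m : ℝ) - 1) := by
      rw [Finset.sum_congr rfl (fun S _ => hsplit S), Finset.sum_add_distrib,
        sum_card_one_mem_aux, Finset.sum_ite_eq']
      have hmem : Finset.univ ∈ Finset.univ.powerset.filter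
          (fun S : Finset (Fin m) => j ∈ S) := by
        simp
      rw [if_pos hmem]
    rw [e0, e1]
    have : 1 / (m : ℝ) + (1 / ((m : ℝ) * ((m : ℝ) - 1)) + ((m : ℝ) - 2) / ((m : ℝ) - 1))
        = 1 := by field_simp; ring
    linarith
  · -- welfare
    rw [Fin.sum_univ_two]
    rw [Finset.sum_congr rfl (fun S _ => hvx0 S), sum_card_one_aux]
    rw [Finset.sum_congr rfl (fun S _ => hvx1 S), Finset.sum_add_distrib,
      sum_card_one_aux, Finset.sum_ite_eq']
    simp only [Finset.mem_powerset, Finset.subset_univ, if_true]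
    field_simp
    ring
  · have h1 : 0 < 1 / (2 * ((m : ℝ) - 1)) - δ := by linarith
    linarith
end

section
/- In the XOS two-buyer example, for m > 2 and 0 < δ < 1/(2(m−1)), the optimal integral welfare over all allocations of all m items is m/2, and the configuration LP optimum is strictly greater than m/2; hence the integrality gap of the configuration LP is strictly greater than 1. -/
lemma hsum1 (m : ℕ) (c : ℝ) :
    ∑ S ∈ (Finset.univ : Finset (Fin m)).powerset, (if S.card = 1 then c else 0) = m * c := by
  rw [Finset.sum_ite, Finset.sum_const, Finset.sum_const_zero, add_zero,
    ← Finset.powersetCard_eq_filter, Finset.card_powersetCard, Finset.card_univ,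
    Fintype.card_fin, Nat.choose_one_right, nsmul_eq_mul]

lemma hsum2 (m : ℕ) (a : ℝ) :
    ∑ S ∈ (Finset.univ : Finset (Fin m)).powerset, (if S = Finset.univ then a else 0) = a := by
  rw [Finset.sum_ite_eq' _ _ (fun _ => a)]
  simp

lemma hsum3 (m : ℕ) (j : Fin m) (c : ℝ) :
    ∑ S ∈ ((Finset.univ : Finset (Fin m)).powerset.filter (fun S => j ∈ S)),
      (if S.card = 1 then c else 0) = c := by
  rw [Finset.sum_filter]
  have h : ∀ S ∈ (Finset.univ : Finset (Fin m)).powerset,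
      (if j ∈ S then (if S.card = 1 then c else 0) else 0) = if S = {j} then c else 0 := by
    intro S _
    by_cases h : S = {j}
    · subst h; simp
    · split_ifs with h1 h2
      · exfalso
        obtain ⟨a, rfl⟩ := Finset.card_eq_one.mp h2
        rw [Finset.mem_singleton] at h1
        exact h (by rw [h1])
      · rfl
      · rfl
  rw [Finset.sum_congr rfl h, Finset.sum_ite_eq' _ _ (fun _ => c)]
  simp

lemma hsum4 (m : ℕ) (j : Fin m) (a : ℝ) :
    ∑ S ∈ ((Finset.univ : Finset (Fin m)).powerset.filter (fun S => j ∈ S)),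
      (if S = Finset.univ then a else 0) = a := by
  rw [Finset.sum_filter]
  have h : ∀ S ∈ (Finset.univ : Finset (Fin m)).powerset,
      (if j ∈ S then (if S = Finset.univ then a else 0) else 0)
        = if S = Finset.univ then a else 0 := by
    intro S _
    by_cases h : S = Finset.univ
    · subst h; simp
    · simp [h]
  rw [Finset.sum_congr rfl h, hsum2]

/-- in the two-buyer XOS example with `m > 2` and
`0 < δ < 1/(2(m−1))`, the optimal integral welfare over allocations of all
items is `m/2`, while the configuration LP admits a feasible solution with
value strictly greater than `m/2`; hence the integrality gap exceeds `1`. -/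
theorem stmt7 (m : ℕ) (hm : 2 < m) (δ : ℝ) (hδ0 : 0 < δ)
    (hδ : δ < 1 / (2 * ((m : ℝ) - 1)))
    (v : Fin 2 → Finset (Fin m) → ℝ)
    (hv1 : ∀ S : Finset (Fin m), v 0 S = if S = ∅ then 0 else 1 / 2 - δ)
    (hv2 : ∀ S : Finset (Fin m), v 1 S = if S = ∅ then 0 else max 1 ((S.card : ℝ) / 2)) :
    -- the optimal integral allocation of all m items has welfare exactly m/2:
    ((∀ X₁ X₂ : Finset (Fin m), Disjoint X₁ X₂ → X₁ ∪ X₂ = Finset.univ →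
        v 0 X₁ + v 1 X₂ ≤ (m : ℝ) / 2) ∧
      (∃ X₁ X₂ : Finset (Fin m), Disjoint X₁ X₂ ∧ X₁ ∪ X₂ = Finset.univ ∧
        v 0 X₁ + v 1 X₂ = (m : ℝ) / 2)) ∧
    -- the configuration LP optimum is strictly greater than m/2:
    (∃ x : Fin 2 → Finset (Fin m) → ℝ,
      (∀ i S, 0 ≤ x i S) ∧
      (∀ i : Fin 2, ∑ S ∈ Finset.univ.powerset, x i S ≤ 1) ∧
      (∀ j : Fin m, ∑ i : Fin 2, ∑ S ∈ Finset.univ.powerset.filter (fun S => j ∈ S),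
          x i S ≤ 1) ∧
      (m : ℝ) / 2 < ∑ i : Fin 2, ∑ S ∈ Finset.univ.powerset, v i S * x i S) := by
  have hM3 : (3 : ℝ) ≤ (m : ℝ) := by exact_mod_cast hm
  have hM0 : (0 : ℝ) < (m : ℝ) := by linarith
  have hM1 : (0 : ℝ) < (m : ℝ) - 1 := by linarith
  have hune : (Finset.univ : Finset (Fin m)) ≠ ∅ := by
    simp [Finset.univ_nonempty_iff, Finset.univ_eq_empty_iff]
    exact ⟨⟨0, by omega⟩⟩
  have hcardu : ((Finset.univ : Finset (Fin m)).card : ℝ) = (m : ℝ) := by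
    rw [Finset.card_univ, Fintype.card_fin]
  have hvuniv : v 1 Finset.univ = (m : ℝ) / 2 := by
    rw [hv2, if_neg hune, hcardu, max_eq_right (by linarith)]
  constructor
  · constructor
    · intro X₁ X₂ hd hu
      by_cases h1 : X₁ = ∅
      · subst h1
        rw [Finset.empty_union] at hu
        subst hu
        rw [hv1, hvuniv, if_pos rfl]
        linarith
      · rw [hv1, if_neg h1, hv2]
        by_cases h2 : X₂ = ∅
        · rw [if_pos h2]; linarith
        · rw [if_neg h2]
          -- X₂ is a proper subset of univ
          obtain ⟨a, ha⟩ := Finset.nonempty_iff_ne_empty.mpr h1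
          have hna : a ∉ X₂ := (Finset.disjoint_left.mp hd) ha
          have hss : X₂ ⊂ Finset.univ :=
            (Finset.ssubset_univ_iff).mpr (fun h => hna (h ▸ Finset.mem_univ a))
          have hlt : X₂.card < m := by
            have := Finset.card_lt_card hss
            rwa [Finset.card_univ, Fintype.card_fin] at this
          have hcr : (X₂.card : ℝ) ≤ (m : ℝ) - 1 := by
            have : (X₂.card : ℝ) < (m : ℝ) := by exact_mod_cast hlt
            have h' : X₂.card + 1 ≤ m := hlt
            have := (Nat.cast_le (α := ℝ)).mpr h'
            push_cast at this
            linarith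
          have hmax : max 1 ((X₂.card : ℝ) / 2) ≤ ((m : ℝ) - 1) / 2 := by
            apply max_le <;> linarith
          linarith
    · refine ⟨∅, Finset.univ, Finset.disjoint_empty_left _, Finset.empty_union _, ?_⟩
      rw [hv1, if_pos rfl, hvuniv]
      ring
  · set M : ℝ := (m : ℝ) with hMdef
    refine ⟨fun i S =>
      if i = 0 then (if S.card = 1 then 1 / M else 0)
      else ((if S = Finset.univ then (M - 2) / (M - 1) else 0)
            + (if S.card = 1 then 1 / (M * (M - 1)) else 0)), ?_, ?_, ?_, ?_⟩
    · intro i S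
      have ha : (0:ℝ) ≤ (M - 2) / (M - 1) := div_nonneg (by linarith) (by linarith)
      have hb : (0:ℝ) ≤ 1 / (M * (M - 1)) := by positivity
      have hc : (0:ℝ) ≤ 1 / M := by positivity
      dsimp only
      split_ifs <;> first | positivity | linarith
    · intro i
      by_cases hi : i = 0
      · simp only [hi, reduceIte]
        rw [hsum1]
        rw [mul_one_div, div_self (ne_of_gt hM0)]
      · simp only [if_neg hi]
        rw [Finset.sum_add_distrib, hsum2, hsum1]
        have : M * (1 / (M * (M - 1))) = 1 / (M - 1) := by
          field_simp
        rw [this]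
        rw [← add_div]
        rw [show M - 2 + 1 = M - 1 by ring, div_self (ne_of_gt hM1)]
    · intro j
      rw [Fin.sum_univ_two]
      simp only [Fin.isValue, reduceIte, Fin.one_eq_zero_iff, OfNat.ofNat_ne_one, if_false]
      rw [hsum3, Finset.sum_add_distrib, hsum4, hsum3]
      have : 1 / M + ((M - 2) / (M - 1) + 1 / (M * (M - 1))) = 1 := by
        field_simp
        ring
      linarith [this]
    · rw [Fin.sum_univ_two]
      simp only [Fin.isValue, reduceIte, Fin.one_eq_zero_iff, OfNat.ofNat_ne_one, if_false]
      have e0 : ∀ S ∈ (Finset.univ : Finset (Fin m)).powerset,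
          v 0 S * (if S.card = 1 then 1 / M else 0)
            = if S.card = 1 then (1 / 2 - δ) * (1 / M) else 0 := by
        intro S _
        by_cases hc : S.card = 1
        · have hne : S ≠ ∅ := by
            intro h; rw [h] at hc; simp at hc
          rw [if_pos hc, if_pos hc, hv1, if_neg hne]
        · rw [if_neg hc, if_neg hc, mul_zero]
      have e1 : ∀ S ∈ (Finset.univ : Finset (Fin m)).powerset,
          v 1 S * ((if S = Finset.univ then (M - 2) / (M - 1) else 0)
            + (if S.card = 1 then 1 / (M * (M - 1)) else 0))
            = (if S = Finset.univ then (M / 2) * ((M - 2) / (M - 1)) else 0)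
              + (if S.card = 1 then 1 / (M * (M - 1)) else 0) := by
        intro S _
        by_cases hu : S = Finset.univ
        · subst hu
          have hc : (Finset.univ : Finset (Fin m)).card ≠ 1 := by
            rw [Finset.card_univ, Fintype.card_fin]; omega
          rw [hvuniv]
          simp only [if_pos rfl, if_neg hc, add_zero]
          simp
        · simp only [if_neg hu, zero_add]
          by_cases hc : S.card = 1
          · have hne : S ≠ ∅ := by
              intro h; rw [h] at hc; simp at hc
            simp only [if_pos hc]
            rw [hv2, if_neg hne, hc]
            norm_num
          · simp only [if_neg hc, mul_zero]
      rw [Finset.sum_congr rfl e0, Finset.sum_congr rfl e1, hsum1,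
        Finset.sum_add_distrib, hsum2, hsum1]
      have key : M * ((1 / 2 - δ) * (1 / M))
          + (M / 2 * ((M - 2) / (M - 1)) + M * (1 / (M * (M - 1))))
          = M / 2 + (1 / (2 * (M - 1)) - δ) := by
        field_simp
        ring
      rw [key]
      have : 0 < 1 / (2 * (M - 1)) - δ := by
        rw [hMdef]
        linarith [hδ]
      linarith
end

section
/- First welfare theorem for stable outcomes: if (X, p) is a stable outcome, then for every allocation (Y₁, ..., Y_n) of the sold items M' = ⋃_i X_i, it holds that ∑_i v_i(X_i) ≥ ∑_i v_i(Y_i). That is, the stable allocation maximizes welfare among all integral allocations of the items it sells. -/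
/-- first welfare theorem for stable outcomes: if `(X, p)` is
stable, then for every allocation `(Yᵢ)` of the sold items `M' = ⋃ᵢ Xᵢ`,
`∑ᵢ vᵢ(Xᵢ) ≥ ∑ᵢ vᵢ(Yᵢ)`. -/
theorem stmt9 {ι α : Type*} [Fintype ι] [Fintype α] [DecidableEq ι] [DecidableEq α]
    (v : ι → Finset α → ℝ) (hnonneg : ∀ i S, 0 ≤ v i S)
    (p : α → ℝ) (hp : ∀ j, 0 ≤ p j)
    (X : ι → Finset α)
    (hdisj : ∀ i k, i ≠ k → Disjoint (X i) (X k))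
    (hstable : ∀ i, ∀ S : Finset α,
      v i S - ∑ j ∈ S, p j ≤ v i (X i) - ∑ j ∈ X i, p j)
    (M' : Finset α) (hM' : M' = Finset.univ.biUnion X)
    (Y : ι → Finset α)
    (hYdisj : ∀ i k, i ≠ k → Disjoint (Y i) (Y k))
    (hYsub : ∀ i, Y i ⊆ M') :
    ∑ i, v i (Y i) ≤ ∑ i, v i (X i) := by
  have h1 : ∑ i, (v i (Y i) - ∑ j ∈ Y i, p j) ≤ ∑ i, (v i (X i) - ∑ j ∈ X i, p j) :=
    Finset.sum_le_sum fun i _ => hstable i (Y i)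
  have hX : ∑ i, ∑ j ∈ X i, p j = ∑ j ∈ M', p j := by
    rw [hM', Finset.sum_biUnion]
    intro i _ k _ hik
    exact hdisj i k hik
  have hY : ∑ i, ∑ j ∈ Y i, p j ≤ ∑ j ∈ M', p j := by
    have : ∑ i, ∑ j ∈ Y i, p j = ∑ j ∈ Finset.univ.biUnion Y, p j := by
      rw [Finset.sum_biUnion]
      intro i _ k _ hik
      exact hYdisj i k hik
    rw [this]
    refine Finset.sum_le_sum_of_subset_of_nonneg ?_ (fun j _ _ => hp j)
    exact Finset.biUnion_subset.mpr fun i _ => hYsub i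
  simp only [Finset.sum_sub_distrib] at h1
  linarith
end

section
/- If (X, p) is a stable outcome, then the integral allocation X achieves the optimum of the configuration LP restricted to the items M' = ⋃_i X_i; in particular no fractional allocation of the items in M' achieves strictly higher welfare than ∑_i v_i(X_i). -/
/-- if `(X, p)` is stable, then `X` achieves the optimum of the
configuration LP restricted to the sold items `M' = ⋃ᵢ Xᵢ`: no feasible
fractional allocation of the items of `M'` attains welfare exceeding
`∑ᵢ vᵢ(Xᵢ)`. -/
theorem stmt10 {ι α : Type*} [Fintype ι] [Fintype α] [DecidableEq ι] [DecidableEq α]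
    (v : ι → Finset α → ℝ) (hnonneg : ∀ i S, 0 ≤ v i S)
    (p : α → ℝ) (hp : ∀ j, 0 ≤ p j)
    (X : ι → Finset α)
    (hdisj : ∀ i k, i ≠ k → Disjoint (X i) (X k))
    (hstable : ∀ i, ∀ S : Finset α,
      v i S - ∑ j ∈ S, p j ≤ v i (X i) - ∑ j ∈ X i, p j)
    (M' : Finset α) (hM' : M' = Finset.univ.biUnion X)
    (x : ι → Finset α → ℝ)
    (hxnonneg : ∀ i S, 0 ≤ x i S)
    (hbuyer : ∀ i, ∑ S ∈ M'.powerset, x i S ≤ 1)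
    (hitem : ∀ j ∈ M', ∑ i, ∑ S ∈ M'.powerset.filter (fun S => j ∈ S), x i S ≤ 1) :
    ∑ i, ∑ S ∈ M'.powerset, v i S * x i S ≤ ∑ i, v i (X i) := by
  set u : ι → ℝ := fun i => v i (X i) - ∑ j ∈ X i, p j with hu_def
  have hu : ∀ i, 0 ≤ u i := fun i =>
    le_trans (hnonneg i ∅) (by simpa using hstable i ∅)
  -- prices of M' = sum of prices of the bundles
  have hMsum : ∑ j ∈ M', p j = ∑ i, ∑ j ∈ X i, p j := by
    rw [hM', Finset.sum_biUnion]
    intro i _ k _ hik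
    exact hdisj i k hik
  -- step 1: v i S ≤ u i + price(S)
  have step1 : ∑ i, ∑ S ∈ M'.powerset, v i S * x i S ≤
      ∑ i, ∑ S ∈ M'.powerset, (u i + ∑ j ∈ S, p j) * x i S := by
    refine Finset.sum_le_sum fun i _ => Finset.sum_le_sum fun S _ => ?_
    refine mul_le_mul_of_nonneg_right ?_ (hxnonneg i S)
    have := hstable i S
    simp only [hu_def]
    linarith
  -- split
  have split : ∑ i, ∑ S ∈ M'.powerset, (u i + ∑ j ∈ S, p j) * x i S =
      (∑ i, ∑ S ∈ M'.powerset, u i * x i S) +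
      ∑ i, ∑ S ∈ M'.powerset, (∑ j ∈ S, p j) * x i S := by
    rw [← Finset.sum_add_distrib]
    refine Finset.sum_congr rfl fun i _ => ?_
    rw [← Finset.sum_add_distrib]
    exact Finset.sum_congr rfl fun S _ => by ring
  -- first part ≤ ∑ u i
  have part1 : ∑ i, ∑ S ∈ M'.powerset, u i * x i S ≤ ∑ i, u i := by
    refine Finset.sum_le_sum fun i _ => ?_
    rw [← Finset.mul_sum]
    calc u i * ∑ S ∈ M'.powerset, x i S ≤ u i * 1 :=
          mul_le_mul_of_nonneg_left (hbuyer i) (hu i)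
      _ = u i := mul_one _
  -- second part = ∑_{j∈M'} p j * (∑_i ∑_{S∋j} x i S)
  have part2eq : ∀ i, ∑ S ∈ M'.powerset, (∑ j ∈ S, p j) * x i S =
      ∑ j ∈ M', p j * ∑ S ∈ M'.powerset.filter (fun S => j ∈ S), x i S := by
    intro i
    have h1 : ∀ S ∈ M'.powerset, (∑ j ∈ S, p j) * x i S =
        ∑ j ∈ M', if j ∈ S then p j * x i S else 0 := by
      intro S hS
      rw [Finset.sum_ite_mem, Finset.inter_eq_right.mpr (Finset.mem_powerset.mp hS),
        Finset.sum_mul]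
    rw [Finset.sum_congr rfl h1, Finset.sum_comm]
    refine Finset.sum_congr rfl fun j _ => ?_
    rw [Finset.mul_sum, Finset.sum_filter]
  have part2 : ∑ i, ∑ S ∈ M'.powerset, (∑ j ∈ S, p j) * x i S ≤ ∑ j ∈ M', p j := by
    calc ∑ i, ∑ S ∈ M'.powerset, (∑ j ∈ S, p j) * x i S
        = ∑ j ∈ M', p j * ∑ i, ∑ S ∈ M'.powerset.filter (fun S => j ∈ S), x i S := by
          rw [Finset.sum_congr rfl fun i _ => part2eq i, Finset.sum_comm]
          exact Finset.sum_congr rfl fun j _ => by rw [Finset.mul_sum]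
      _ ≤ ∑ j ∈ M', p j * 1 :=
          Finset.sum_le_sum fun j hj =>
            mul_le_mul_of_nonneg_left (hitem j hj) (hp j)
      _ = ∑ j ∈ M', p j := by simp
  calc ∑ i, ∑ S ∈ M'.powerset, v i S * x i S
      ≤ (∑ i, ∑ S ∈ M'.powerset, u i * x i S) +
        ∑ i, ∑ S ∈ M'.powerset, (∑ j ∈ S, p j) * x i S := by rw [← split]; exact step1
    _ ≤ (∑ i, u i) + ∑ j ∈ M', p j := add_le_add part1 part2
    _ = ∑ i, v i (X i) := by
        rw [hMsum, ← Finset.sum_add_distrib]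
        exact Finset.sum_congr rfl fun i _ => by simp [hu_def]
end

section
/- For two budget-additive buyers with budgets B₁ ≥ B₂, if ∑_j v_{1j} ≥ B₁ and one sets prices p_j = v_{1j}, allocates any demanded bundle D₂ to buyer 2 and a set S₁ \ D₂ (with B₁/2 ≤ ∑_{j∈S₁} v_{1j} ≤ B₁) to buyer 1, then the resulting outcome is stable and its welfare is at least B₁/2 ≥ (B₁+B₂)/4 ≥ OPT/4. -/
/-- case 1 of the two-budget-additive-buyer theorem:
with `B₁ ≥ B₂ > 0`, `∑ⱼ v₁ⱼ ≥ B₁`, prices `pⱼ = v₁ⱼ`, a set `S₁` with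
`B₁/2 ≤ ∑_{j∈S₁} v₁ⱼ ≤ B₁`, and `D₂` a demanded bundle of buyer 2, the
outcome `(S₁ \ D₂, D₂)` at prices `p` is stable and its welfare is at least
`B₁/2 ≥ (B₁+B₂)/4 ≥ OPT/4`. -/
theorem stmt15 {α : Type*} [Fintype α] [DecidableEq α]
    (B₁ B₂ : ℝ) (hB : B₁ ≥ B₂) (hB₂ : 0 < B₂)
    (w₁ w₂ : α → ℝ) (hw₁0 : ∀ j, 0 ≤ w₁ j) (hw₂0 : ∀ j, 0 ≤ w₂ j)
    (hw₁B : ∀ j, w₁ j ≤ B₁) (hw₂B : ∀ j, w₂ j ≤ B₂)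
    (v₁ v₂ : Finset α → ℝ)
    (hv₁ : ∀ S, v₁ S = min (∑ j ∈ S, w₁ j) B₁)
    (hv₂ : ∀ S, v₂ S = min (∑ j ∈ S, w₂ j) B₂)
    (hsum : B₁ ≤ ∑ j ∈ Finset.univ, w₁ j)
    (p : α → ℝ) (hp : ∀ j, p j = w₁ j)
    (S₁ : Finset α) (hS₁l : B₁ / 2 ≤ ∑ j ∈ S₁, w₁ j) (hS₁u : ∑ j ∈ S₁, w₁ j ≤ B₁)
    (D₂ : Finset α)
    (hD₂ : ∀ S : Finset α, v₂ S - ∑ j ∈ S, p j ≤ v₂ D₂ - ∑ j ∈ D₂, p j) :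
    -- stability of the outcome (S₁ \ D₂, D₂):
    Disjoint (S₁ \ D₂) D₂ ∧
    (∀ S : Finset α, v₁ S - ∑ j ∈ S, p j ≤ v₁ (S₁ \ D₂) - ∑ j ∈ S₁ \ D₂, p j) ∧
    (∀ S : Finset α, v₂ S - ∑ j ∈ S, p j ≤ v₂ D₂ - ∑ j ∈ D₂, p j) ∧
    -- welfare guarantees:
    B₁ / 2 ≤ v₁ (S₁ \ D₂) + v₂ D₂ ∧
    (B₁ + B₂) / 4 ≤ B₁ / 2 ∧
    (∀ Y₁ Y₂ : Finset α, Disjoint Y₁ Y₂ → Y₁ ∪ Y₂ = Finset.univ →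
      (v₁ Y₁ + v₂ Y₂) / 4 ≤ v₁ (S₁ \ D₂) + v₂ D₂) := by
  have hpw : ∀ S : Finset α, ∑ j ∈ S, p j = ∑ j ∈ S, w₁ j := fun S =>
    Finset.sum_congr rfl (fun j _ => hp j)
  have hsub : ∑ j ∈ S₁ \ D₂, w₁ j ≤ ∑ j ∈ S₁, w₁ j :=
    Finset.sum_le_sum_of_subset_of_nonneg (Finset.sdiff_subset)
      (fun j _ _ => hw₁0 j)
  have hv₁S : v₁ (S₁ \ D₂) = ∑ j ∈ S₁ \ D₂, w₁ j := by
    rw [hv₁]; exact min_eq_left (le_trans hsub hS₁u)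
  -- buyer 2 gets nonnegative utility at D₂
  have hD₂0 : (0:ℝ) ≤ v₂ D₂ - ∑ j ∈ D₂, p j := by
    have := hD₂ ∅
    simpa [hv₂, hB₂.le] using this
  have hv₂D : ∑ j ∈ D₂, w₁ j ≤ v₂ D₂ := by
    have := hD₂0; rw [hpw] at this; linarith
  refine ⟨Finset.sdiff_disjoint, ?_, hD₂, ?_, by linarith, ?_⟩
  · intro S
    have h1 : v₁ S - ∑ j ∈ S, p j ≤ 0 := by
      rw [hv₁, hpw]; have := min_le_left (∑ j ∈ S, w₁ j) B₁; linarith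
    have h2 : v₁ (S₁ \ D₂) - ∑ j ∈ S₁ \ D₂, p j = 0 := by
      rw [hv₁S, hpw]; ring
    linarith
  · have hcap : ∑ j ∈ S₁ ∩ D₂, w₁ j ≤ ∑ j ∈ D₂, w₁ j :=
      Finset.sum_le_sum_of_subset_of_nonneg (Finset.inter_subset_right)
        (fun j _ _ => hw₁0 j)
    have hsplit : ∑ j ∈ S₁ ∩ D₂, w₁ j + ∑ j ∈ S₁ \ D₂, w₁ j = ∑ j ∈ S₁, w₁ j :=
      Finset.sum_inter_add_sum_sdiff S₁ D₂ w₁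
    rw [hv₁S]; linarith
  · intro Y₁ Y₂ _ _
    have h1 : v₁ Y₁ ≤ B₁ := by rw [hv₁]; exact min_le_right _ _
    have h2 : v₂ Y₂ ≤ B₂ := by rw [hv₂]; exact min_le_right _ _
    have hcap : ∑ j ∈ S₁ ∩ D₂, w₁ j ≤ ∑ j ∈ D₂, w₁ j :=
      Finset.sum_le_sum_of_subset_of_nonneg (Finset.inter_subset_right)
        (fun j _ _ => hw₁0 j)
    have hsplit : ∑ j ∈ S₁ ∩ D₂, w₁ j + ∑ j ∈ S₁ \ D₂, w₁ j = ∑ j ∈ S₁, w₁ j :=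
      Finset.sum_inter_add_sum_sdiff S₁ D₂ w₁
    rw [hv₁S] at *
    linarith
end

section
/- For every instance with two budget-additive buyers, there exists a stable outcome whose social welfare is at least OPT/4, where OPT is the maximum welfare over all integral allocations. -/
open Finset

lemma stmt17_knapsack {α : Type*} [Fintype α] [DecidableEq α] (B : ℝ) (hB : 0 ≤ B)
    (w : α → ℝ) (hw0 : ∀ j, 0 ≤ w j) (hwB : ∀ j, w j ≤ B) (C : Finset α) :
    ∃ X ⊆ C, (∑ j ∈ X, w j ≤ B) ∧
      (min (∑ j ∈ C, w j) B) / 2 ≤ ∑ j ∈ X, w j := by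
  classical
  by_cases hC : ∑ j ∈ C, w j ≤ B
  · refine ⟨C, le_rfl, hC, ?_⟩
    rw [min_eq_left hC]
    linarith [Finset.sum_nonneg (fun j (_ : j ∈ C) => hw0 j)]
  · push_neg at hC
    rw [min_eq_right hC.le]
    obtain ⟨X, hX, hmax⟩ := Finset.exists_max_image
      (C.powerset.filter (fun S => ∑ j ∈ S, w j ≤ B)) (fun S => ∑ j ∈ S, w j)
      ⟨∅, by simp [hB]⟩
    simp only [mem_filter, mem_powerset] at hX
    by_cases hhalf : B / 2 ≤ ∑ j ∈ X, w j
    · exact ⟨X, hX.1, hX.2, hhalf⟩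
    · push_neg at hhalf
      have hex : ∃ x ∈ C \ X, B < ∑ j ∈ X, w j + w x := by
        by_contra h
        push_neg at h
        have hz : ∀ x ∈ C \ X, w x = 0 := by
          intro x hx
          have hxm := h x hx
          have hmem : insert x X ∈ C.powerset.filter (fun S => ∑ j ∈ S, w j ≤ B) := by
            simp only [mem_filter, mem_powerset]
            refine ⟨insert_subset ((mem_sdiff.mp hx).1) hX.1, ?_⟩
            rw [Finset.sum_insert (mem_sdiff.mp hx).2]; linarith
          have h2 := hmax _ hmem
          rw [Finset.sum_insert (mem_sdiff.mp hx).2] at h2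
          have := hw0 x
          linarith
        have hCX : ∑ j ∈ C, w j = ∑ j ∈ X, w j := by
          rw [← Finset.sum_sdiff hX.1, Finset.sum_eq_zero hz, zero_add]
        linarith [hX.2]
      obtain ⟨x, hx, hgt⟩ := hex
      have hXnn : 0 ≤ ∑ j ∈ X, w j := Finset.sum_nonneg (fun j _ => hw0 j)
      refine ⟨{x}, ?_, ?_, ?_⟩
      · simpa using (mem_sdiff.mp hx).1
      · simpa using hwB x
      · rw [Finset.sum_singleton]; linarith

lemma stmt17_aux {α : Type*} [Fintype α] [DecidableEq α]
    (B₁ B₂ : ℝ) (hB₁ : 0 ≤ B₁) (hB₂ : 0 ≤ B₂)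
    (w₁ w₂ : α → ℝ) (hw₁0 : ∀ j, 0 ≤ w₁ j) (hw₂0 : ∀ j, 0 ≤ w₂ j)
    (hw₁B : ∀ j, w₁ j ≤ B₁) :
    ∃ X₁ X₂ : Finset α, Disjoint X₁ X₂ ∧
      (∀ S, min (∑ j ∈ S, w₁ j) B₁ - ∑ j ∈ S, w₁ j ≤
        min (∑ j ∈ X₁, w₁ j) B₁ - ∑ j ∈ X₁, w₁ j) ∧
      (∀ S, min (∑ j ∈ S, w₂ j) B₂ - ∑ j ∈ S, w₁ j ≤
        min (∑ j ∈ X₂, w₂ j) B₂ - ∑ j ∈ X₂, w₁ j) ∧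
      min (∑ j, w₁ j) B₁ / 2 ≤ min (∑ j ∈ X₁, w₁ j) B₁ + min (∑ j ∈ X₂, w₂ j) B₂ := by
  classical
  obtain ⟨X₂, _, hX₂max⟩ := Finset.exists_max_image (univ : Finset (Finset α))
    (fun S => min (∑ j ∈ S, w₂ j) B₂ - ∑ j ∈ S, w₁ j) ⟨∅, mem_univ _⟩
  obtain ⟨X₁, hX₁sub, hX₁B, hX₁half⟩ := stmt17_knapsack B₁ hB₁ w₁ hw₁0 hw₁B X₂ᶜ
  have hdisj : Disjoint X₁ X₂ := disjoint_compl_left.mono_left hX₁sub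
  have hv2 : ∑ j ∈ X₂, w₁ j ≤ min (∑ j ∈ X₂, w₂ j) B₂ := by
    have h0 := hX₂max ∅ (mem_univ _)
    simp only [Finset.sum_empty, min_eq_left hB₂] at h0
    linarith [h0]
  have hX₂nn : 0 ≤ ∑ j ∈ X₂, w₁ j := Finset.sum_nonneg (fun j _ => hw₁0 j)
  have hsplit : ∑ j ∈ X₂ᶜ, w₁ j + ∑ j ∈ X₂, w₁ j = ∑ j, w₁ j :=
    Finset.sum_compl_add_sum X₂ w₁
  have hminX₁ : min (∑ j ∈ X₁, w₁ j) B₁ = ∑ j ∈ X₁, w₁ j := min_eq_left hX₁B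
  refine ⟨X₁, X₂, hdisj, ?_, ?_, ?_⟩
  · intro S
    rw [hminX₁]
    have := min_le_left (∑ j ∈ S, w₁ j) B₁
    linarith
  · intro S
    exact hX₂max S (mem_univ _)
  · have h1 : min (∑ j, w₁ j) B₁ ≤ min (∑ j ∈ X₂ᶜ, w₁ j) B₁ + ∑ j ∈ X₂, w₁ j := by
      rcases le_total (∑ j ∈ X₂ᶜ, w₁ j) B₁ with h | h
      · rw [min_eq_left h]
        have := min_le_left (∑ j, w₁ j) B₁
        linarith
      · rw [min_eq_right h]
        have := min_le_right (∑ j, w₁ j) B₁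
        linarith
    rw [hminX₁]
    linarith

/-- for every instance with two budget-additive buyers there
exists a stable outcome whose welfare is at least `OPT/4`. -/
theorem stmt17 {α : Type*} [Fintype α] [DecidableEq α]
    (B₁ B₂ : ℝ) (hB₁ : 0 ≤ B₁) (hB₂ : 0 ≤ B₂)
    (w₁ w₂ : α → ℝ) (hw₁0 : ∀ j, 0 ≤ w₁ j) (hw₂0 : ∀ j, 0 ≤ w₂ j)
    (hw₁B : ∀ j, w₁ j ≤ B₁) (hw₂B : ∀ j, w₂ j ≤ B₂)
    (v₁ v₂ : Finset α → ℝ)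
    (hv₁ : ∀ S, v₁ S = min (∑ j ∈ S, w₁ j) B₁)
    (hv₂ : ∀ S, v₂ S = min (∑ j ∈ S, w₂ j) B₂) :
    ∃ (p : α → ℝ) (X₁ X₂ : Finset α),
      (∀ j, 0 ≤ p j) ∧
      Disjoint X₁ X₂ ∧
      (∀ S : Finset α, v₁ S - ∑ j ∈ S, p j ≤ v₁ X₁ - ∑ j ∈ X₁, p j) ∧
      (∀ S : Finset α, v₂ S - ∑ j ∈ S, p j ≤ v₂ X₂ - ∑ j ∈ X₂, p j) ∧
      (∀ Y₁ Y₂ : Finset α, Disjoint Y₁ Y₂ → Y₁ ∪ Y₂ = Finset.univ →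
        (v₁ Y₁ + v₂ Y₂) / 4 ≤ v₁ X₁ + v₂ X₂) := by
  classical
  set M₁ := min (∑ j, w₁ j) B₁ with hM₁
  set M₂ := min (∑ j, w₂ j) B₂ with hM₂
  have hY₁ : ∀ Y : Finset α, v₁ Y ≤ M₁ := by
    intro Y
    rw [hv₁]
    exact min_le_min (Finset.sum_le_sum_of_subset_of_nonneg (subset_univ Y)
      (fun i _ _ => hw₁0 i)) le_rfl
  have hY₂ : ∀ Y : Finset α, v₂ Y ≤ M₂ := by
    intro Y
    rw [hv₂]
    exact min_le_min (Finset.sum_le_sum_of_subset_of_nonneg (subset_univ Y)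
      (fun i _ _ => hw₂0 i)) le_rfl
  have hM₁nn : 0 ≤ M₁ := le_min (Finset.sum_nonneg (fun j _ => hw₁0 j)) hB₁
  have hM₂nn : 0 ≤ M₂ := le_min (Finset.sum_nonneg (fun j _ => hw₂0 j)) hB₂
  rcases le_total M₂ M₁ with hle | hle
  · obtain ⟨X₁, X₂, hdisj, hs₁, hs₂, hw⟩ :=
      stmt17_aux B₁ B₂ hB₁ hB₂ w₁ w₂ hw₁0 hw₂0 hw₁B
    refine ⟨w₁, X₁, X₂, hw₁0, hdisj, ?_, ?_, ?_⟩
    · intro S; rw [hv₁, hv₁]; exact hs₁ S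
    · intro S; rw [hv₂, hv₂]; exact hs₂ S
    · intro Y₁ Y₂ _ _
      have h1 := hY₁ Y₁
      have h2 := hY₂ Y₂
      rw [hv₁] at h1
      rw [hv₂] at h2
      simp only [hv₁, hv₂]
      linarith
  · obtain ⟨X₂, X₁, hdisj, hs₂, hs₁, hw⟩ :=
      stmt17_aux B₂ B₁ hB₂ hB₁ w₂ w₁ hw₂0 hw₁0 hw₂B
    refine ⟨w₂, X₁, X₂, hw₂0, hdisj.symm, ?_, ?_, ?_⟩
    · intro S; rw [hv₁, hv₁]; exact hs₁ S
    · intro S; rw [hv₂, hv₂]; exact hs₂ S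
    · intro Y₁ Y₂ _ _
      have h1 := hY₁ Y₁
      have h2 := hY₂ Y₂
      rw [hv₁] at h1
      rw [hv₂] at h2
      simp only [hv₁, hv₂]
      linarith
end

section
/- The function f₁(S) = max_{j=1,...,k} XOS(S ∩ B_j), where XOS(T) = |T| if |T| ≠ 1, XOS(T) = 2 if |T| = 1, and XOS(∅) = 0, and B₁,...,B_k partition the item set, is an XOS (fractionally subadditive) valuation: it is the pointwise maximum of a finite family of additive functions with nonnegative weights. -/
private def g19 {α : Type*} [DecidableEq α] {k : ℕ} (B : Fin k → Finset α) :
    Fin k × Option α → α → ℝ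
  | (j, none), x => if x ∈ B j then 1 else 0
  | (j, some y), x => if y ∈ B j ∧ x = y then 2 else 0

/-- `f₁(S) = maxⱼ XOS(S ∩ Bⱼ)`, where the buckets `B₁,…,B_k`
partition the item set and `XOS(T) = 2` if `|T| = 1` and `|T|` otherwise,
is an XOS valuation: the pointwise maximum of finitely many additive
functions with nonnegative weights. -/
theorem stmt19 {α : Type*} [Fintype α] [DecidableEq α]
    (k : ℕ) (hk : 0 < k) (B : Fin k → Finset α)
    (hdisj : ∀ i j : Fin k, i ≠ j → Disjoint (B i) (B j))
    (hcover : Finset.univ.biUnion B = Finset.univ)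
    (XOS : Finset α → ℝ)
    (hXOS : ∀ T : Finset α, XOS T = if T.card = 1 then 2 else (T.card : ℝ))
    (f₁ : Finset α → ℝ)
    (hf₁ : ∀ S : Finset α,
      f₁ S = (Finset.univ.sup' ⟨⟨0, hk⟩, Finset.mem_univ _⟩ fun j => XOS (S ∩ B j))) :
    ∃ (r : ℕ) (a : Fin r → α → ℝ),
      (∀ i j, 0 ≤ a i j) ∧
      ∀ S : Finset α,
        (∀ i, ∑ j ∈ S, a i j ≤ f₁ S) ∧ (∃ i, f₁ S = ∑ j ∈ S, a i j) := by
  classical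
  have e : Fin (Fintype.card (Fin k × Option α)) ≃ Fin k × Option α :=
    (Fintype.equivFin (Fin k × Option α)).symm
  -- basic facts about XOS
  have hXcard : ∀ T : Finset α, (T.card : ℝ) ≤ XOS T := by
    intro T
    rw [hXOS]
    split_ifs with h
    · rw [h]; norm_num
    · exact le_rfl
  have hXnn : ∀ T : Finset α, 0 ≤ XOS T := by
    intro T
    rw [hXOS]
    split_ifs <;> positivity
  have hle : ∀ (S : Finset α) (j : Fin k), XOS (S ∩ B j) ≤ f₁ S := by
    intro S j
    rw [hf₁]
    exact Finset.le_sup' (fun j => XOS (S ∩ B j)) (Finset.mem_univ j)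
  -- sum formulas
  have hsum_none : ∀ (S : Finset α) (j : Fin k),
      ∑ x ∈ S, g19 B (j, none) x = ((S ∩ B j).card : ℝ) := by
    intro S j
    simp only [g19, Finset.sum_ite_mem]
    simp
  have hsum_some : ∀ (S : Finset α) (j : Fin k) (y : α),
      ∑ x ∈ S, g19 B (j, some y) x = if y ∈ B j ∧ y ∈ S then 2 else 0 := by
    intro S j y
    by_cases hy : y ∈ B j
    · simp only [g19, hy, true_and, Finset.sum_ite_eq' S y (fun _ => (2:ℝ))]
    · simp [g19, hy]
  have hg : ∀ (p : Fin k × Option α) (x : α), 0 ≤ g19 B p x := by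
    rintro ⟨j, _ | y⟩ x <;> simp only [g19] <;> split_ifs <;> norm_num
  have hub : ∀ (S : Finset α) (p : Fin k × Option α), ∑ x ∈ S, g19 B p x ≤ f₁ S := by
    rintro S ⟨j, _ | y⟩
    · rw [hsum_none]
      exact le_trans (hXcard _) (hle S j)
    · rw [hsum_some]
      split_ifs with h
      · have h1 : 1 ≤ (S ∩ B j).card :=
          Finset.card_pos.mpr ⟨y, Finset.mem_inter.mpr ⟨h.2, h.1⟩⟩
        refine le_trans ?_ (hle S j)
        rw [hXOS]
        split_ifs with hc
        · exact le_rfl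
        · have h2 : 2 ≤ (S ∩ B j).card := by omega
          exact_mod_cast h2
      · exact le_trans (hXnn _) (hle S j)
  have hach : ∀ S : Finset α, ∃ p : Fin k × Option α, f₁ S = ∑ x ∈ S, g19 B p x := by
    intro S
    have hne : (Finset.univ : Finset (Fin k)).Nonempty := ⟨⟨0, hk⟩, Finset.mem_univ _⟩
    obtain ⟨j, -, hj⟩ := Finset.exists_mem_eq_sup' hne (fun j => XOS (S ∩ B j))
    have hfj : f₁ S = XOS (S ∩ B j) := by rw [hf₁]; exact hj
    by_cases hc : (S ∩ B j).card = 1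
    · obtain ⟨y, hy⟩ := Finset.card_eq_one.mp hc
      have hyS : y ∈ S ∧ y ∈ B j := by
        have hm : y ∈ S ∩ B j := hy ▸ Finset.mem_singleton_self y
        exact ⟨(Finset.mem_inter.mp hm).1, (Finset.mem_inter.mp hm).2⟩
      refine ⟨(j, some y), ?_⟩
      rw [hsum_some, if_pos ⟨hyS.2, hyS.1⟩, hfj, hXOS, if_pos hc]
    · refine ⟨(j, none), ?_⟩
      rw [hsum_none, hfj, hXOS, if_neg hc]
  refine ⟨Fintype.card (Fin k × Option α), fun i => g19 B (e i), fun i x => hg _ x, ?_⟩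
  intro S
  refine ⟨fun i => hub S (e i), ?_⟩
  obtain ⟨p, hp⟩ := hach S
  exact ⟨e.symm p, by simpa [Equiv.apply_symm_apply] using hp⟩
end
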